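/- Let π be a finitely generated free group, K ⊇ ℚ, and θ: π → T̂ a group-like expansion inducing the isomorphism θ: K̂π ≅ T̂. Let N be the cyclic symmetrization on T̂. Then for every n ≥ 1, an element u ∈ Kπ satisfies N(θ(u)) ∈ N(T̂ₙ) if and only if |u| ∈ |K·1 + (Iπ)ⁿ|, where |·| denotes the projection to the K-module spanned by conjugacy classes of π (i.e. Kπ modulo the K-span of elements xy − yx). -/

import Mathlib

/-! Let `π` be a finitely generated free group, `K ⊇ ℚ` a commutative ring, and
`H = π^{ab} ⊗ K`.  We model the completed tensor algebra `T̂ = ∏ₘ H^{⊗m}`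
concretely: an element is a function assigning to each word in the alphabet `ι`
(the basis of `H` given by the free generators of `π`) its coefficient.
Multiplication is convolution over splittings of words, the coproduct is given
dually by shuffles, and the filtration is `T̂ₚ = ∏_{m ≥ p} H^{⊗m}`.  The
projection `|·| : Kπ → Kπ̂` onto the free module spanned by conjugacy classes
is the quotient by the `K`-span of the elements `xy − yx`, `x, y ∈ π`. -/

/-- The completed tensor algebra on the free module with basis `ι`. -/
abbrev NCSeries (ι K : Type*) := List ι → K

variable {ι K : Type*} [CommRing K]

/-- The unit of `T̂`. -/
def oneNC : NCSeries ι K := fun w =>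
  match w with
  | [] => 1
  | _ => 0

/-- The multiplication of `T̂`. -/
def mulNC (f g : NCSeries ι K) : NCSeries ι K := fun w =>
  ∑ k ∈ Finset.range (w.length + 1), f (w.take k) * g (w.drop k)

/-- The cyclic symmetrization `N : T̂ → T̂`, with `N = 0` on `H^{⊗0}` and
`N(X₁⋯Xₙ) = Σᵢ Xᵢ⋯XₙX₁⋯X_{i−1}` on `H^{⊗n}`. -/
def cyclicN (f : NCSeries ι K) : NCSeries ι K := fun w =>
  match w with
  | [] => 0
  | w => ∑ i ∈ Finset.range w.length, f (w.rotate i)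

/-- Merge two words `u`, `v` according to a bit mask (`true` positions are
filled from `u`, `false` positions from `v`). -/
def mergeBits : List Bool → List ι → List ι → List ι
  | [], _, _ => []
  | true :: bs, a :: u, v => a :: mergeBits bs u v
  | true :: _, [], _ => []
  | false :: bs, u, a :: v => a :: mergeBits bs u v
  | false :: _, _, [] => []

/-- The coproduct `Δ : T̂ → T̂ ⊗̂ T̂`, written dually on coefficient functions
via shuffles. -/
def deltaNC (f : NCSeries ι K) (u v : List ι) : K :=
  ∑ g : Fin (u.length + v.length) → Bool,
    if (List.ofFn g).count true = u.length then f (mergeBits (List.ofFn g) u v)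
    else 0

/-- An element of `T̂` is group-like if `ε(u) = 1` and `Δu = u ⊗̂ u`. -/
def IsGroupLikeNC (u : NCSeries ι K) : Prop :=
  u [] = 1 ∧ ∀ v w : List ι, deltaNC u v w = u v * u w

/-- The exponent sum of a word of the free group at the generator `i`. -/
def expSum [DecidableEq ι] (i : ι) : FreeGroup ι →* Multiplicative ℤ :=
  FreeGroup.lift fun j => Multiplicative.ofAdd (if j = i then (1 : ℤ) else 0)

/-- A group-like expansion `θ` of the free group (Massuyeau). -/
def IsGroupLikeExpansion [DecidableEq ι] (θ : FreeGroup ι → NCSeries ι K) : Prop :=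
  (∀ x y : FreeGroup ι, θ (x * y) = mulNC (θ x) (θ y)) ∧
  (∀ x : FreeGroup ι, IsGroupLikeNC (θ x)) ∧
  (∀ (x : FreeGroup ι) (i : ι), θ x [i] = ((Multiplicative.toAdd (expSum i x) : ℤ) : K))

/-- The `K`-linear extension `Kπ → T̂` of a map `π → T̂`. -/
noncomputable def linExt (θ : FreeGroup ι → NCSeries ι K)
    (u : MonoidAlgebra K (FreeGroup ι)) : NCSeries ι K := fun w =>
  Finsupp.sum u.coeff fun x c => c * θ x w

/-- The `n`-th power `(Iπ)ⁿ` of the augmentation ideal of the group ring `Kπ`,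
realized as the `K`-span of products `(x₁−1)⋯(xₙ−1)`. -/
noncomputable def augIdealPow (n : ℕ) : Submodule K (MonoidAlgebra K (FreeGroup ι)) :=
  Submodule.span K {u : MonoidAlgebra K (FreeGroup ι) | ∃ l : List (FreeGroup ι),
    l.length = n ∧ u = (l.map (fun x => MonoidAlgebra.of K (FreeGroup ι) x - 1)).prod}

/-- The `K`-span of the elements `xy − yx` (`x, y ∈ π`) of the group ring; the
quotient by it is the free module on the conjugacy classes of `π`, and two
elements of `Kπ` have the same image `|·|` there iff their difference lies in
this span. -/
noncomputable def conjugationSpan (ι K : Type*) [CommRing K] :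
    Submodule K (MonoidAlgebra K (FreeGroup ι)) :=
  Submodule.span K {z : MonoidAlgebra K (FreeGroup ι) | ∃ x y : FreeGroup ι,
    z = MonoidAlgebra.of K (FreeGroup ι) x * MonoidAlgebra.of K (FreeGroup ι) y
      - MonoidAlgebra.of K (FreeGroup ι) y * MonoidAlgebra.of K (FreeGroup ι) x}


/-! ### Auxiliary development -/

section AuxDev

open Finset Submodule List

/-- Abbreviation for the generator products `(x_{w₁}−1)⋯(x_{w_k}−1)`. -/
noncomputable def Pel (w : List ι) : MonoidAlgebra K (FreeGroup ι) :=
  (w.map fun i => MonoidAlgebra.of K (FreeGroup ι) (FreeGroup.of i) - 1).prod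

lemma cyclicN_nil (f : NCSeries ι K) : cyclicN f [] = 0 := rfl

lemma cyclicN_ne_nil (f : NCSeries ι K) {w : List ι} (hw : w ≠ []) :
    cyclicN f w = ∑ i ∈ Finset.range w.length, f (w.rotate i) := by
  cases w with
  | nil => exact absurd rfl hw
  | cons a t => rfl

lemma oneNC_ne_nil {v : List ι} (h : v ≠ []) : (oneNC v : K) = 0 := by
  cases v with
  | nil => exact absurd rfl h
  | cons a t => rfl

lemma oneNC_nil : (oneNC ([] : List ι) : K) = 1 := rfl

/-! #### Linearity of `linExt` -/

lemma linExt_eq_lc (θ : FreeGroup ι → NCSeries ι K) (u : MonoidAlgebra K (FreeGroup ι)) :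
    linExt θ u = (Finsupp.linearCombination K θ ∘ₗ
      (MonoidAlgebra.coeffLinearEquiv K : MonoidAlgebra K (FreeGroup ι) ≃ₗ[K] _).toLinearMap) u := by
  funext w
  rw [LinearMap.comp_apply, LinearEquiv.coe_coe, MonoidAlgebra.coeffLinearEquiv_apply,
    Finsupp.linearCombination_apply, Finsupp.sum, Finset.sum_apply, linExt, Finsupp.sum]
  rfl

lemma linExt_add (θ : FreeGroup ι → NCSeries ι K) (u v : MonoidAlgebra K (FreeGroup ι)) :
    linExt θ (u + v) = linExt θ u + linExt θ v := by
  simp only [linExt_eq_lc, map_add]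

lemma linExt_smul (θ : FreeGroup ι → NCSeries ι K) (c : K) (u : MonoidAlgebra K (FreeGroup ι)) :
    linExt θ (c • u) = c • linExt θ u := by
  simp only [linExt_eq_lc, map_smul]

lemma linExt_sub (θ : FreeGroup ι → NCSeries ι K) (u v : MonoidAlgebra K (FreeGroup ι)) :
    linExt θ (u - v) = linExt θ u - linExt θ v := by
  simp only [linExt_eq_lc, map_sub]

lemma linExt_zero (θ : FreeGroup ι → NCSeries ι K) :
    linExt θ (0 : MonoidAlgebra K (FreeGroup ι)) = 0 := by
  simp only [linExt_eq_lc, map_zero]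

lemma linExt_single (θ : FreeGroup ι → NCSeries ι K) (x : FreeGroup ι) (c : K) :
    linExt θ (MonoidAlgebra.single x c) = c • θ x := by
  rw [linExt_eq_lc, LinearMap.comp_apply]
  exact Finsupp.linearCombination_single K c x

lemma linExt_of (θ : FreeGroup ι → NCSeries ι K) (x : FreeGroup ι) :
    linExt θ (MonoidAlgebra.of K (FreeGroup ι) x) = θ x := by
  rw [MonoidAlgebra.of_apply, linExt_single, one_smul]

lemma linExt_finset_sum (θ : FreeGroup ι → NCSeries ι K) {α : Type*} (s : Finset α)
    (F : α → MonoidAlgebra K (FreeGroup ι)) :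
    linExt θ (∑ x ∈ s, F x) = ∑ x ∈ s, linExt θ (F x) := by
  rw [linExt_eq_lc, map_sum]
  exact Finset.sum_congr rfl fun x _ => (linExt_eq_lc θ (F x)).symm

/-! #### `mulNC` basics -/

lemma mulNC_add_left (f g h : NCSeries ι K) : mulNC (f + g) h = mulNC f h + mulNC g h := by
  funext w; simp [mulNC, add_mul, Finset.sum_add_distrib]

lemma mulNC_add_right (f g h : NCSeries ι K) : mulNC f (g + h) = mulNC f g + mulNC f h := by
  funext w; simp [mulNC, mul_add, Finset.sum_add_distrib]

lemma mulNC_smul_left (c : K) (f g : NCSeries ι K) : mulNC (c • f) g = c • mulNC f g := by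
  funext w; simp [mulNC, Finset.mul_sum, mul_assoc]

lemma mulNC_smul_right (c : K) (f g : NCSeries ι K) : mulNC f (c • g) = c • mulNC f g := by
  funext w
  simp only [mulNC, Pi.smul_apply, smul_eq_mul, Finset.mul_sum]
  exact Finset.sum_congr rfl fun k _ => by ring

lemma mulNC_zero_left (g : NCSeries ι K) : mulNC 0 g = 0 := by
  funext w; simp [mulNC]

lemma mulNC_zero_right (f : NCSeries ι K) : mulNC f 0 = 0 := by
  funext w; simp [mulNC]

lemma linExt_mul (θ : FreeGroup ι → NCSeries ι K)
    (hm : ∀ x y : FreeGroup ι, θ (x * y) = mulNC (θ x) (θ y))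
    (u v : MonoidAlgebra K (FreeGroup ι)) :
    linExt θ (u * v) = mulNC (linExt θ u) (linExt θ v) := by
  induction u using MonoidAlgebra.induction_linear with
  | zero => rw [zero_mul, linExt_zero, mulNC_zero_left]
  | add f g hf hg => rw [add_mul, linExt_add, hf, hg, linExt_add, mulNC_add_left]
  | single x c =>
    induction v using MonoidAlgebra.induction_linear with
    | zero => rw [mul_zero, linExt_zero, mulNC_zero_right]
    | add f g hf hg => rw [mul_add, linExt_add, hf, hg, linExt_add, mulNC_add_right]
    | single y e =>
      rw [MonoidAlgebra.single_mul_single, linExt_single, linExt_single, linExt_single,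
        hm, mulNC_smul_left, mulNC_smul_right, smul_smul]


lemma linExt_one (θ : FreeGroup ι → NCSeries ι K) (h1 : θ 1 = oneNC) :
    linExt θ (1 : MonoidAlgebra K (FreeGroup ι)) = oneNC := by
  rw [MonoidAlgebra.one_def, linExt_single, h1, one_smul]

/-- The unit series is the image of `1 ∈ π` under a multiplicative expansion. -/
lemma theta_one (θ : FreeGroup ι → NCSeries ι K)
    (hm : ∀ x y : FreeGroup ι, θ (x * y) = mulNC (θ x) (θ y))
    (h1 : θ (1 : FreeGroup ι) [] = 1) :
    θ (1 : FreeGroup ι) = oneNC := by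
  have key : ∀ L : ℕ, ∀ w : List ι, w.length = L → θ 1 w = oneNC w := by
    intro L
    induction L using Nat.strong_induction_on with
    | _ L IH =>
      intro w hw
      cases w with
      | nil => simpa [oneNC_nil] using h1
      | cons a t =>
        have hmm := congrFun (hm 1 1) (a :: t)
        rw [mul_one] at hmm
        simp only [mulNC] at hmm
        set w := a :: t with hwdef
        have hterm : ∀ k ∈ Finset.range (w.length + 1),
            θ 1 (w.take k) * θ 1 (w.drop k)
              = if k = 0 then θ 1 w else if k = w.length then θ 1 w else 0 := by
          intro k hk
          have hk' : k ≤ w.length := by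
            have := Finset.mem_range.1 hk; omega
          rcases Nat.eq_zero_or_pos k with rfl | hkpos
          · simp [h1]
          rcases eq_or_ne k w.length with rfl | hkne
          · simp [List.take_length, List.drop_length, h1, hkpos.ne']
          · have hklt : k < w.length := lt_of_le_of_ne hk' hkne
            have htk : (w.take k).length = k := by
              rw [List.length_take]; omega
            have h0 : θ 1 (w.take k) = 0 := by
              rw [IH k (by omega) (w.take k) htk]
              apply oneNC_ne_nil
              intro hnil
              rw [hnil] at htk
              simp at htk; omega
            simp [h0, hkpos.ne', hkne]
        rw [Finset.sum_congr rfl hterm] at hmm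
        have hL : w.length ≠ 0 := by simp [hwdef]
        have hsum : ∑ k ∈ Finset.range (w.length + 1),
            (if k = 0 then θ 1 w else if k = w.length then θ 1 w else 0)
            = θ 1 w + θ 1 w := by
          have hsplit : ∀ k ∈ Finset.range (w.length + 1),
              (if k = 0 then θ 1 w else if k = w.length then θ 1 w else 0)
                = (if k = 0 then θ 1 w else 0) + (if k = w.length then θ 1 w else 0) := by
            intro k _
            rcases eq_or_ne k 0 with rfl | hk0
            · simp [Ne.symm hL]
            · simp [hk0]
          rw [Finset.sum_congr rfl hsplit, Finset.sum_add_distrib]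
          congr 1
          · rw [Finset.sum_ite_eq' (Finset.range (w.length + 1)) 0]
            simp
          · rw [Finset.sum_ite_eq' (Finset.range (w.length + 1)) w.length]
            simp
        rw [hsum] at hmm
        have : θ 1 w = 0 := left_eq_add.1 hmm
        rw [this]
        exact (oneNC_ne_nil (by simp [hwdef])).symm
  funext w
  exact key w.length w rfl

/-! #### Vanishing below a given degree -/

/-- `f` vanishes on all words of length `< n`. -/
def VBlow (n : ℕ) (f : NCSeries ι K) : Prop := ∀ w : List ι, w.length < n → f w = 0

lemma VBlow.mul {a b : ℕ} {f g : NCSeries ι K} (hf : VBlow a f) (hg : VBlow b g) :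
    VBlow (a + b) (mulNC f g) := by
  intro w hw
  refine Finset.sum_eq_zero fun k hk => ?_
  rcases lt_or_ge (w.take k).length a with h | h
  · rw [hf _ h, zero_mul]
  · rw [hg _ ?_, mul_zero]
    have h1 : (w.take k).length = min k w.length := List.length_take
    rw [List.length_drop]
    omega

lemma cyclicN_VB {m : ℕ} {f : NCSeries ι K} (hf : VBlow m f) {w : List ι}
    (hw : w.length < m) : cyclicN f w = 0 := by
  cases w with
  | nil => rfl
  | cons a t =>
    rw [cyclicN_ne_nil _ (List.cons_ne_nil a t)]
    exact Finset.sum_eq_zero fun i _ => hf _ (by rw [List.length_rotate]; exact hw)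

/-! #### Linearity of `cyclicN` -/

lemma cyclicN_add (f g : NCSeries ι K) : cyclicN (f + g) = cyclicN f + cyclicN g := by
  funext w
  cases w with
  | nil => simp [cyclicN_nil]
  | cons a t =>
    simp [cyclicN_ne_nil _ (List.cons_ne_nil a t), Finset.sum_add_distrib]

lemma cyclicN_smul (c : K) (f : NCSeries ι K) : cyclicN (c • f) = c • cyclicN f := by
  funext w
  cases w with
  | nil => simp [cyclicN_nil]
  | cons a t =>
    simp [cyclicN_ne_nil _ (List.cons_ne_nil a t), Finset.mul_sum]

lemma cyclicN_zero : cyclicN (0 : NCSeries ι K) = 0 := by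
  funext w
  cases w with
  | nil => rfl
  | cons a t => simp [cyclicN_ne_nil _ (List.cons_ne_nil a t)]

lemma cyclicN_sub (f g : NCSeries ι K) : cyclicN (f - g) = cyclicN f - cyclicN g := by
  have : f - g = f + (-1 : K) • g := by funext w; simp; ring
  rw [this, cyclicN_add, cyclicN_smul]
  funext w; simp; ring

lemma cyclicN_oneNC : cyclicN (oneNC : NCSeries ι K) = 0 := by
  funext w
  cases w with
  | nil => rfl
  | cons a t =>
    rw [cyclicN_ne_nil _ (List.cons_ne_nil a t)]
    refine Finset.sum_eq_zero fun i _ => oneNC_ne_nil ?_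
    intro h
    have := List.length_rotate (a :: t) i
    rw [h] at this
    simp at this

/-! #### The key cyclic-invariance of `N` -/

lemma cyclicN_mulNC_comm (f g : NCSeries ι K) :
    cyclicN (mulNC f g) = cyclicN (mulNC g f) := by
  funext w
  rcases eq_or_ne w [] with rfl | hw
  · rfl
  rw [cyclicN_ne_nil _ hw, cyclicN_ne_nil _ hw]
  have hL : 0 < w.length := List.length_pos_iff.2 hw
  have expand : ∀ (p q : NCSeries ι K) (i : ℕ), mulNC p q (w.rotate i) =
      ∑ k ∈ Finset.range (w.length + 1), p ((w.rotate i).take k) * q ((w.rotate i).drop k) := by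
    intro p q i
    rw [mulNC, List.length_rotate]
  simp only [expand]
  rw [← Finset.sum_product', ← Finset.sum_product']
  refine Finset.sum_nbij' (fun p => ((p.1 + p.2) % w.length, w.length - p.2))
    (fun p => ((p.1 + p.2) % w.length, w.length - p.2)) ?_ ?_ ?_ ?_ ?_
  · rintro ⟨i, k⟩ hik
    simp only [Finset.mem_product, Finset.mem_range] at hik ⊢
    exact ⟨Nat.mod_lt _ hL, by omega⟩
  · rintro ⟨i, k⟩ hik
    simp only [Finset.mem_product, Finset.mem_range] at hik ⊢
    exact ⟨Nat.mod_lt _ hL, by omega⟩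
  · rintro ⟨i, k⟩ hik
    simp only [Finset.mem_product, Finset.mem_range] at hik
    obtain ⟨hi, hk⟩ := hik
    have hk' : k ≤ w.length := by omega
    have h1 : ((i + k) % w.length + (w.length - k)) % w.length = i := by
      rw [Nat.mod_add_mod]
      have : i + k + (w.length - k) = i + w.length := by omega
      rw [this, Nat.add_mod_right, Nat.mod_eq_of_lt hi]
    have h2 : w.length - (w.length - k) = k := by omega
    simp [h1, h2]
  · rintro ⟨i, k⟩ hik
    simp only [Finset.mem_product, Finset.mem_range] at hik
    obtain ⟨hi, hk⟩ := hik
    have h1 : ((i + k) % w.length + (w.length - k)) % w.length = i := by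
      rw [Nat.mod_add_mod]
      have : i + k + (w.length - k) = i + w.length := by omega
      rw [this, Nat.add_mod_right, Nat.mod_eq_of_lt hi]
    have h2 : w.length - (w.length - k) = k := by omega
    simp [h1, h2]
  · rintro ⟨i, k⟩ hik
    simp only [Finset.mem_product, Finset.mem_range] at hik
    obtain ⟨hi, hk⟩ := hik
    have hk' : k ≤ (w.rotate i).length := by rw [List.length_rotate]; omega
    have hr : w.rotate ((i + k) % w.length) = (w.rotate i).drop k ++ (w.rotate i).take k := by
      rw [List.rotate_mod, ← List.rotate_rotate, List.rotate_eq_drop_append_take hk']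
    have hdlen : ((w.rotate i).drop k).length = w.length - k := by
      rw [List.length_drop, List.length_rotate]
    have htake : (w.rotate ((i + k) % w.length)).take (w.length - k) = (w.rotate i).drop k := by
      rw [hr, ← hdlen, List.take_append_of_le_length le_rfl, List.take_length]
    have hdrop : (w.rotate ((i + k) % w.length)).drop (w.length - k) = (w.rotate i).take k := by
      rw [hr, ← hdlen, List.drop_append_of_le_length le_rfl, List.drop_length, List.nil_append]
    dsimp only
    rw [htake, hdrop, mul_comm]

/-! #### `Pel` and the powers of the augmentation ideal -/

lemma Pel_nil : Pel ([] : List ι) = (1 : MonoidAlgebra K (FreeGroup ι)) := rfl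

lemma Pel_cons (i : ι) (w : List ι) :
    Pel (i :: w) = (MonoidAlgebra.of K (FreeGroup ι) (FreeGroup.of i) - 1) * Pel w := by
  simp [Pel]

lemma Pel_append (u v : List ι) :
    Pel (u ++ v) = (Pel u : MonoidAlgebra K (FreeGroup ι)) * Pel v := by
  simp [Pel]

lemma Pel_mem_aug (w : List ι) :
    (Pel w : MonoidAlgebra K (FreeGroup ι)) ∈ augIdealPow (ι := ι) (K := K) w.length := by
  refine Submodule.subset_span ⟨w.map FreeGroup.of, by simp, ?_⟩
  rw [Pel, List.map_map]
  rfl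

lemma mul_mem_span {S T : Set (MonoidAlgebra K (FreeGroup ι))}
    {W : Submodule K (MonoidAlgebra K (FreeGroup ι))}
    (h : ∀ a ∈ S, ∀ b ∈ T, a * b ∈ W)
    {x y : MonoidAlgebra K (FreeGroup ι)}
    (hx : x ∈ Submodule.span K S) (hy : y ∈ Submodule.span K T) : x * y ∈ W := by
  have hle : Submodule.span K S * Submodule.span K T ≤ W := by
    rw [Submodule.span_mul_span]
    exact Submodule.span_le.2 (Set.mul_subset_iff.2 h)
  exact hle (Submodule.mul_mem_mul hx hy)

lemma augPow_mul_le (a b : ℕ) :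
    augIdealPow (ι := ι) (K := K) a * augIdealPow b ≤ augIdealPow (a + b) := by
  rw [augIdealPow, augIdealPow, Submodule.span_mul_span]
  refine Submodule.span_le.2 (Set.mul_subset_iff.2 ?_)
  rintro x ⟨l₁, h₁, rfl⟩ y ⟨l₂, h₂, rfl⟩
  exact Submodule.subset_span ⟨l₁ ++ l₂, by simp [h₁, h₂], by simp⟩

lemma augPow_succ_le (k : ℕ) (hk : 1 ≤ k) :
    augIdealPow (ι := ι) (K := K) (k + 1) ≤ augIdealPow k := by
  refine Submodule.span_le.2 ?_
  rintro z ⟨l, hl, rfl⟩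
  cases l with
  | nil =>
    simp only [List.length_nil] at hl
    exact absurd hl (by omega)
  | cons a l' =>
  cases l' with
  | nil =>
    simp only [List.length_cons, List.length_nil] at hl
    exact absurd hl (by omega)
  | cons b t =>
  have hlen : t.length + 1 = k := by simp at hl; omega
  have hgen : ∀ x : FreeGroup ι,
      ((x :: t).map (fun x => MonoidAlgebra.of K (FreeGroup ι) x - 1)).prod
        ∈ augIdealPow (ι := ι) (K := K) k :=
    fun x => Submodule.subset_span ⟨x :: t, by simpa using hlen, rfl⟩
  have hab : MonoidAlgebra.of K (FreeGroup ι) (a * b)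
      = MonoidAlgebra.of K (FreeGroup ι) a * MonoidAlgebra.of K (FreeGroup ι) b :=
    map_mul _ a b
  have key : (((a :: b :: t).map (fun x => MonoidAlgebra.of K (FreeGroup ι) x - 1)).prod
        : MonoidAlgebra K (FreeGroup ι))
      = ((a * b :: t).map (fun x => MonoidAlgebra.of K (FreeGroup ι) x - 1)).prod
        - ((a :: t).map (fun x => MonoidAlgebra.of K (FreeGroup ι) x - 1)).prod
        - ((b :: t).map (fun x => MonoidAlgebra.of K (FreeGroup ι) x - 1)).prod := by
    simp only [List.map_cons, List.prod_cons, hab]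
    noncomm_ring
  rw [key]
  exact sub_mem (sub_mem (hgen _) (hgen _)) (hgen _)

lemma augPow_le_of_le {k m : ℕ} (hk : 1 ≤ k) (hkm : k ≤ m) :
    augIdealPow (ι := ι) (K := K) m ≤ augIdealPow k := by
  induction m, hkm using Nat.le_induction with
  | base => exact le_rfl
  | succ m hm ih => exact (augPow_succ_le m (hk.trans hm)).trans ih

/-- Every `x − 1` lies in the span of generator differences plus `(Iπ)²`. -/
lemma genm (x : FreeGroup ι) :
    (MonoidAlgebra.of K (FreeGroup ι) x - 1) ∈
      Submodule.span K {z : MonoidAlgebra K (FreeGroup ι) |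
        ∃ i : ι, z = MonoidAlgebra.of K (FreeGroup ι) (FreeGroup.of i) - 1}
      ⊔ augIdealPow 2 := by
  refine FreeGroup.induction_on x ?_ ?_ ?_ ?_
  · rw [map_one, sub_self]
    exact Submodule.zero_mem _
  · intro i
    exact Submodule.mem_sup_left (Submodule.subset_span ⟨i, rfl⟩)
  · intro i ih
    generalize (FreeGroup.of i : FreeGroup ι) = p at ih ⊢
    have hinv : MonoidAlgebra.of K (FreeGroup ι) p⁻¹ * MonoidAlgebra.of K (FreeGroup ι) p
        = 1 := by
      rw [← map_mul, inv_mul_cancel, map_one]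
    have key : MonoidAlgebra.of K (FreeGroup ι) p⁻¹ - 1
        = -(MonoidAlgebra.of K (FreeGroup ι) p - 1)
          - ((MonoidAlgebra.of K (FreeGroup ι) p⁻¹ - 1)
              * (MonoidAlgebra.of K (FreeGroup ι) p - 1)) := by
      have expand : -(MonoidAlgebra.of K (FreeGroup ι) p - 1)
          - ((MonoidAlgebra.of K (FreeGroup ι) p⁻¹ - 1)
              * (MonoidAlgebra.of K (FreeGroup ι) p - 1))
          = -(MonoidAlgebra.of K (FreeGroup ι) p⁻¹ * MonoidAlgebra.of K (FreeGroup ι) p)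
            + MonoidAlgebra.of K (FreeGroup ι) p⁻¹ := by
        noncomm_ring
      rw [expand, hinv]
      abel
    rw [key]
    refine sub_mem (neg_mem ih) (Submodule.mem_sup_right (Submodule.subset_span ?_))
    exact ⟨[p⁻¹, p], by simp, by simp⟩
  · intro x y hx hy
    have hab : MonoidAlgebra.of K (FreeGroup ι) (x * y)
        = MonoidAlgebra.of K (FreeGroup ι) x * MonoidAlgebra.of K (FreeGroup ι) y :=
      map_mul _ x y
    have key : MonoidAlgebra.of K (FreeGroup ι) (x * y) - 1
        = (MonoidAlgebra.of K (FreeGroup ι) x - 1) + (MonoidAlgebra.of K (FreeGroup ι) y - 1)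
          + (MonoidAlgebra.of K (FreeGroup ι) x - 1) * (MonoidAlgebra.of K (FreeGroup ι) y - 1) := by
      rw [hab]; noncomm_ring
    rw [key]
    refine add_mem (add_mem hx hy) (Submodule.mem_sup_right (Submodule.subset_span ?_))
    exact ⟨[x, y], by simp, by simp⟩

lemma spanPel_le_aug (d : ℕ) :
    Submodule.span K (Pel '' {w : List ι | w.length = d})
      ≤ augIdealPow (ι := ι) (K := K) d := by
  refine Submodule.span_le.2 ?_
  rintro z ⟨w, hw, rfl⟩
  rw [← hw]
  exact Pel_mem_aug w

lemma listprod_mem (l : List (FreeGroup ι)) :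
    ((l.map fun x => MonoidAlgebra.of K (FreeGroup ι) x - 1).prod
        : MonoidAlgebra K (FreeGroup ι)) ∈
      Submodule.span K (Pel '' {w : List ι | w.length = l.length})
        ⊔ augIdealPow (l.length + 1) := by
  induction l with
  | nil =>
    refine Submodule.mem_sup_left (Submodule.subset_span ⟨[], rfl, ?_⟩)
    simp [Pel_nil]
  | cons x t ih =>
    obtain ⟨s, hs, r, hr, hsr⟩ := Submodule.mem_sup.1 (genm (ι := ι) (K := K) x)
    obtain ⟨s', hs', r', hr', hsr'⟩ := Submodule.mem_sup.1 ih
    have hx : ((x :: t).map fun x => MonoidAlgebra.of K (FreeGroup ι) x - 1).prod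
        = (s + r) * (s' + r') := by
      rw [hsr, hsr']
      simp [List.prod_cons]
    rw [hx]
    have hexp : (s + r) * (s' + r') = s * s' + (s * r' + (r * s' + r * r')) := by noncomm_ring
    rw [hexp]
    have hspanGen_le_aug1 : Submodule.span K {z : MonoidAlgebra K (FreeGroup ι) |
        ∃ i : ι, z = MonoidAlgebra.of K (FreeGroup ι) (FreeGroup.of i) - 1}
        ≤ augIdealPow (ι := ι) (K := K) 1 := by
      refine Submodule.span_le.2 ?_
      rintro z ⟨i, rfl⟩
      exact Submodule.subset_span ⟨[FreeGroup.of i], by simp, by simp⟩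
    refine add_mem (Submodule.mem_sup_left ?_) (Submodule.mem_sup_right ?_)
    · -- s * s' ∈ span (Pel '' {w | w.length = t.length + 1})
      refine mul_mem_span ?_ hs hs'
      rintro a ⟨i, rfl⟩ b ⟨w, hw, rfl⟩
      refine Submodule.subset_span ⟨i :: w, ?_, ?_⟩
      · simp [Set.mem_setOf_eq] at hw ⊢; omega
      · rw [Pel_cons]
    · -- remaining three terms lie in augIdealPow (t.length + 2)
      have h1 : s * r' ∈ augIdealPow (ι := ι) (K := K) (t.length + 2) := by
        have : s * r' ∈ augIdealPow (ι := ι) (K := K) 1 * augIdealPow (t.length + 1) :=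
          Submodule.mul_mem_mul (hspanGen_le_aug1 hs) hr'
        have h2 := augPow_mul_le (ι := ι) (K := K) 1 (t.length + 1) this
        have : 1 + (t.length + 1) = t.length + 2 := by omega
        rwa [this] at h2
      have h2 : r * s' ∈ augIdealPow (ι := ι) (K := K) (t.length + 2) := by
        have : r * s' ∈ augIdealPow (ι := ι) (K := K) 2 * augIdealPow t.length :=
          Submodule.mul_mem_mul hr (spanPel_le_aug t.length hs')
        have h2 := augPow_mul_le (ι := ι) (K := K) 2 t.length this
        have : 2 + t.length = t.length + 2 := by omega
        rwa [this] at h2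
      have h3 : r * r' ∈ augIdealPow (ι := ι) (K := K) (t.length + 2) := by
        have : r * r' ∈ augIdealPow (ι := ι) (K := K) 2 * augIdealPow (t.length + 1) :=
          Submodule.mul_mem_mul hr hr'
        have h2 := augPow_mul_le (ι := ι) (K := K) 2 (t.length + 1) this
        exact augPow_le_of_le (by omega) (by omega) h2
      have hfin : ((x :: t).length + 1) = t.length + 2 := by simp
      rw [hfin]
      exact add_mem h1 (add_mem h2 h3)

lemma aug_le_split_aux (n : ℕ) : ∀ m k : ℕ, n - k = m → 1 ≤ k → k ≤ n →
    augIdealPow (ι := ι) (K := K) k ≤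
      Submodule.span K (Pel '' {w : List ι | k ≤ w.length ∧ w.length < n})
        ⊔ augIdealPow n := by
  intro m
  induction m with
  | zero =>
    intro k hm hk hkn
    have : k = n := by omega
    subst this
    exact le_sup_right
  | succ m ih =>
    intro k hm hk hkn
    have hkn' : k < n := by omega
    have step : augIdealPow (ι := ι) (K := K) k ≤
        Submodule.span K (Pel '' {w : List ι | w.length = k}) ⊔ augIdealPow (k + 1) := by
      refine Submodule.span_le.2 ?_
      rintro z ⟨l, hl, rfl⟩
      rw [← hl]
      exact listprod_mem l
    refine step.trans (sup_le ?_ ((ih (k + 1) (by omega) (by omega) (by omega)).trans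
      (sup_le ?_ le_sup_right)))
    · refine le_sup_left.trans' (Submodule.span_mono (Set.image_mono ?_))
      intro w hw
      simp only [Set.mem_setOf_eq] at hw ⊢
      omega
    · refine le_sup_left.trans' (Submodule.span_mono (Set.image_mono ?_))
      intro w hw
      simp only [Set.mem_setOf_eq] at hw ⊢
      omega

lemma aug_le_split (n : ℕ) (k : ℕ) (hk : 1 ≤ k) (hkn : k ≤ n) :
    augIdealPow (ι := ι) (K := K) k ≤
      Submodule.span K (Pel '' {w : List ι | k ≤ w.length ∧ w.length < n})
        ⊔ augIdealPow n :=
  aug_le_split_aux n (n - k) k rfl hk hkn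

/-! #### Vanishing of `linExt` on powers of the augmentation ideal -/

lemma VB_linExt_genprod (θ : FreeGroup ι → NCSeries ι K)
    (hm : ∀ x y : FreeGroup ι, θ (x * y) = mulNC (θ x) (θ y))
    (h1 : θ 1 = oneNC)
    (heps : ∀ x : FreeGroup ι, θ x [] = 1)
    (l : List (FreeGroup ι)) :
    VBlow l.length (linExt θ ((l.map fun x => MonoidAlgebra.of K (FreeGroup ι) x - 1).prod)) := by
  induction l with
  | nil =>
    intro w hw
    exact absurd hw (by simp)
  | cons x t ih =>
    rw [List.map_cons, List.prod_cons, linExt_mul θ hm]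
    have hx : VBlow 1 (linExt θ (MonoidAlgebra.of K (FreeGroup ι) x - 1)) := by
      intro w hw
      have : w = [] := by
        cases w with
        | nil => rfl
        | cons a t => simp at hw
      subst this
      rw [linExt_sub, linExt_of, linExt_one θ h1]
      simp [heps x, oneNC_nil]
    have h2 := hx.mul ih
    rw [add_comm 1 t.length] at h2
    exact h2

lemma VB_linExt_aug (θ : FreeGroup ι → NCSeries ι K)
    (hm : ∀ x y : FreeGroup ι, θ (x * y) = mulNC (θ x) (θ y))
    (h1 : θ 1 = oneNC)
    (heps : ∀ x : FreeGroup ι, θ x [] = 1)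
    {n : ℕ} {r : MonoidAlgebra K (FreeGroup ι)}
    (hr : r ∈ augIdealPow (ι := ι) (K := K) n) : VBlow n (linExt θ r) := by
  refine Submodule.span_induction (p := fun x _ => VBlow n (linExt θ x)) ?_ ?_ ?_ ?_ hr
  · rintro z ⟨l, hl, rfl⟩
    rw [← hl]
    exact VB_linExt_genprod θ hm h1 heps l
  · intro w hw
    rw [linExt_zero]
    rfl
  · intro x y _ _ hx hy
    intro w hw
    rw [linExt_add]
    simp [hx w hw, hy w hw]
  · intro c x _ hx
    intro w hw
    rw [linExt_smul]
    simp [hx w hw]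

/-! #### The triangular coefficient computation -/

lemma linExt_Pel_coeff [DecidableEq ι] (θ : FreeGroup ι → NCSeries ι K)
    (hm : ∀ x y : FreeGroup ι, θ (x * y) = mulNC (θ x) (θ y))
    (h1 : θ 1 = oneNC)
    (heps : ∀ x : FreeGroup ι, θ x [] = 1)
    (hcoef : ∀ (x : FreeGroup ι) (i : ι),
      θ x [i] = ((Multiplicative.toAdd (expSum i x) : ℤ) : K)) :
    ∀ (w w' : List ι), w'.length ≤ w.length →
      linExt θ (Pel w) w' = if w' = w then 1 else 0 := by
  have hq : ∀ i j : ι, linExt θ (MonoidAlgebra.of K (FreeGroup ι) (FreeGroup.of i) - 1) [j]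
      = if j = i then 1 else 0 := by
    intro i j
    rw [linExt_sub, linExt_of, linExt_one θ h1]
    have : θ (FreeGroup.of i) [j] = ((Multiplicative.toAdd (expSum j (FreeGroup.of i)) : ℤ) : K) :=
      hcoef (FreeGroup.of i) j
    rw [Pi.sub_apply, this]
    have : expSum j (FreeGroup.of i) = Multiplicative.ofAdd (if i = j then (1 : ℤ) else 0) := by
      rw [expSum, FreeGroup.lift_apply_of]
    rw [this]
    have hone : (oneNC [j] : K) = 0 := oneNC_ne_nil (by simp)
    rw [hone, sub_zero]
    rcases eq_or_ne i j with rfl | hij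
    · simp
    · simp [hij, Ne.symm hij]
  have hq0 : ∀ i : ι, linExt θ (MonoidAlgebra.of K (FreeGroup ι) (FreeGroup.of i) - 1) [] = 0 := by
    intro i
    rw [linExt_sub, linExt_of, linExt_one θ h1]
    simp [heps, oneNC_nil]
  intro w
  induction w with
  | nil =>
    intro w' hle
    have : w' = [] := List.length_eq_zero_iff.1 (by simpa using hle)
    subst this
    rw [Pel_nil, linExt_one θ h1]
    simp [oneNC_nil]
  | cons i t ih =>
    intro w' hle
    rw [Pel_cons, linExt_mul θ hm]
    have hF : VBlow t.length (linExt θ (Pel t)) := by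
      have h := VB_linExt_genprod θ hm h1 heps (t.map FreeGroup.of)
      rw [List.map_map] at h
      simpa [Pel, Function.comp_def] using h
    cases w' with
    | nil =>
      rw [show mulNC (linExt θ (MonoidAlgebra.of K (FreeGroup ι) (FreeGroup.of i) - 1))
          (linExt θ (Pel t)) [] = ∑ k ∈ Finset.range 1,
            linExt θ (MonoidAlgebra.of K (FreeGroup ι) (FreeGroup.of i) - 1) (List.take k [])
              * linExt θ (Pel t) (List.drop k []) from rfl]
      rw [Finset.sum_range_one]
      simp only [List.take_nil, List.drop_nil]
      rw [hq0 i, zero_mul]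
      simp
    | cons a s =>
      have hmul : mulNC (linExt θ (MonoidAlgebra.of K (FreeGroup ι) (FreeGroup.of i) - 1))
          (linExt θ (Pel t)) (a :: s)
          = ∑ k ∈ Finset.range ((a :: s).length + 1),
            linExt θ (MonoidAlgebra.of K (FreeGroup ι) (FreeGroup.of i) - 1) ((a :: s).take k)
              * linExt θ (Pel t) ((a :: s).drop k) := rfl
      rw [hmul]
      have h1mem : 1 ∈ Finset.range ((a :: s).length + 1) := by
        simp
      rw [Finset.sum_eq_single_of_mem 1 h1mem ?_]
      · have htake : (a :: s).take 1 = [a] := rfl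
        have hdrop : (a :: s).drop 1 = s := rfl
        rw [htake, hdrop, hq i a, ih s (by simpa using hle)]
        rcases eq_or_ne a i with rfl | ha
        · rcases eq_or_ne s t with rfl | hs
          · simp
          · simp [hs]
        · simp [ha]
      · intro k hk hk1
        rcases Nat.eq_zero_or_pos k with rfl | hkpos
        · simp only [List.take_zero]
          rw [hq0 i, zero_mul]
        · have hk2 : 2 ≤ k := by omega
          have hkle : k ≤ s.length + 1 := by
            simp only [Finset.mem_range, List.length_cons] at hk
            omega
          have hlen : ((a :: s).drop k).length < t.length := by
            rw [List.length_drop]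
            simp only [List.length_cons]
            simp only [List.length_cons] at hle
            omega
          rw [hF _ hlen, mul_zero]

/-! #### The conjugation span -/

lemma comm_add_left (f g b : MonoidAlgebra K (FreeGroup ι)) :
    (f + g) * b - b * (f + g) = (f * b - b * f) + (g * b - b * g) := by
  noncomm_ring

lemma comm_add_right (b f g : MonoidAlgebra K (FreeGroup ι)) :
    b * (f + g) - (f + g) * b = (b * f - f * b) + (b * g - g * b) := by
  noncomm_ring

lemma comm_mem_conjSpan (a b : MonoidAlgebra K (FreeGroup ι)) :
    a * b - b * a ∈ conjugationSpan ι K := by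
  induction a using MonoidAlgebra.induction_linear with
  | zero => simp
  | add f g hf hg =>
    rw [comm_add_left f g b]
    exact add_mem hf hg
  | single x c =>
    induction b using MonoidAlgebra.induction_linear with
    | zero => simp
    | add f g hf hg =>
      rw [comm_add_right (MonoidAlgebra.single x c) f g]
      exact add_mem hf hg
    | single y e =>
      have h : (MonoidAlgebra.single x c : MonoidAlgebra K (FreeGroup ι))
            * MonoidAlgebra.single y e
          - MonoidAlgebra.single y e * MonoidAlgebra.single x c
          = (c * e) • (MonoidAlgebra.of K (FreeGroup ι) x * MonoidAlgebra.of K (FreeGroup ι) y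
              - MonoidAlgebra.of K (FreeGroup ι) y * MonoidAlgebra.of K (FreeGroup ι) x) := by
        simp [MonoidAlgebra.single_mul_single, MonoidAlgebra.of_apply, smul_sub,
          MonoidAlgebra.smul_single', Finsupp.smul_single, smul_eq_mul, mul_one, mul_comm e c]
      rw [h]
      exact Submodule.smul_mem _ _ (Submodule.subset_span ⟨x, y, rfl⟩)

lemma Pel_rotate_mem (w : List ι) (j : ℕ) (hj : j ≤ w.length) :
    (Pel w : MonoidAlgebra K (FreeGroup ι)) - Pel (w.rotate j) ∈ conjugationSpan ι K := by
  have hsplit : (Pel w : MonoidAlgebra K (FreeGroup ι)) = Pel (w.take j) * Pel (w.drop j) := by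
    rw [← Pel_append, List.take_append_drop]
  rw [List.rotate_eq_drop_append_take hj, Pel_append, hsplit]
  exact comm_mem_conjSpan _ _

lemma cyclicN_linExt_conj (θ : FreeGroup ι → NCSeries ι K)
    (hm : ∀ x y : FreeGroup ι, θ (x * y) = mulNC (θ x) (θ y))
    {s : MonoidAlgebra K (FreeGroup ι)} (hs : s ∈ conjugationSpan ι K) :
    cyclicN (linExt θ s) = 0 := by
  refine Submodule.span_induction (p := fun x _ => cyclicN (linExt θ x) = 0) ?_ ?_ ?_ ?_ hs
  · rintro z ⟨x, y, rfl⟩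
    rw [linExt_sub, linExt_mul θ hm, linExt_mul θ hm, linExt_of, linExt_of,
      cyclicN_sub, cyclicN_mulNC_comm, sub_self]
  · show cyclicN (linExt θ (0 : MonoidAlgebra K (FreeGroup ι))) = 0
    rw [linExt_zero, cyclicN_zero]
  · intro x y _ _ hx hy
    show cyclicN (linExt θ (x + y)) = 0
    rw [linExt_add, cyclicN_add, hx, hy, add_zero]
  · intro c x _ hx
    show cyclicN (linExt θ (c • x)) = 0
    rw [linExt_smul, cyclicN_smul, hx, smul_zero]

/-! #### The key averaging step -/

lemma key_step [Fintype ι] [DecidableEq ι] [Algebra ℚ K]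
    (θ : FreeGroup ι → NCSeries ι K)
    (hm : ∀ x y : FreeGroup ι, θ (x * y) = mulNC (θ x) (θ y))
    (h1 : θ 1 = oneNC)
    (heps : ∀ x : FreeGroup ι, θ x [] = 1)
    (hcoef : ∀ (x : FreeGroup ι) (i : ι),
      θ x [i] = ((Multiplicative.toAdd (expSum i x) : ℤ) : K))
    {d : ℕ} (hd : 1 ≤ d)
    {y : MonoidAlgebra K (FreeGroup ι)}
    (hy : y ∈ Submodule.span K (Pel '' {w : List ι | w.length = d}))
    (hvan : ∀ w' : List ι, w'.length = d → cyclicN (linExt θ y) w' = 0) :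
    y ∈ conjugationSpan ι K := by
  obtain ⟨l, hl, rfl⟩ := (Finsupp.mem_span_image_iff_linearCombination K).1 hy
  have hsupp : ∀ w ∈ l.support, (w : List ι).length = d :=
    fun w hw => (Finsupp.mem_supported K l).1 hl hw
  have heval : ∀ uu : List ι, uu.length = d →
      linExt θ (Finsupp.linearCombination K Pel l) uu = l uu := by
    intro uu hu
    rw [Finsupp.linearCombination_apply, Finsupp.sum, linExt_finset_sum, Finset.sum_apply]
    have hterm : ∀ w ∈ l.support, linExt θ (l w • Pel (K := K) w) uu = if uu = w then l w else 0 := by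
      intro w hw
      rw [linExt_smul, Pi.smul_apply, smul_eq_mul,
        linExt_Pel_coeff θ hm h1 heps hcoef w uu (by rw [hu, hsupp w hw]),
        mul_ite, mul_one, mul_zero]
    rw [Finset.sum_congr rfl hterm, Finset.sum_ite_eq]
    split_ifs with h
    · rfl
    · exact (Finsupp.notMem_support_iff.1 h).symm
  have star : ∀ v : List ι, v.length = d →
      ∑ i ∈ Finset.range d, l (v.rotate i) = 0 := by
    intro v hv
    have hvne : v ≠ [] := by
      intro h; rw [h] at hv; simp at hv; omega
    have h0 := hvan v hv
    rw [cyclicN_ne_nil _ hvne, hv] at h0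
    rw [← h0]
    refine Finset.sum_congr rfl fun i _ => ?_
    exact (heval (v.rotate i) (by rw [List.length_rotate, hv])).symm
  classical
  set Sd : Finset (List ι) :=
    Finset.univ.image (List.Vector.toList : List.Vector ι d → List ι) with hSd
  have hmemSd : ∀ v : List ι, v ∈ Sd ↔ v.length = d := by
    intro v
    constructor
    · intro hv
      obtain ⟨x, _, rfl⟩ := Finset.mem_image.1 hv
      exact x.toList_length
    · intro hv
      exact Finset.mem_image.2 ⟨⟨v, hv⟩, Finset.mem_univ _, rfl⟩
  have hy' : Finsupp.linearCombination K Pel l = ∑ w ∈ Sd, l w • Pel (K := K) w := by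
    rw [Finsupp.linearCombination_apply, Finsupp.sum]
    refine Finset.sum_subset (fun w hw => (hmemSd w).2 (hsupp w hw)) ?_
    intro w _ hw
    rw [Finsupp.notMem_support_iff.1 hw, zero_smul]
  have hz : ∑ i ∈ Finset.range d, ∑ w ∈ Sd, l w • Pel (K := K) (w.rotate i)
      = (0 : MonoidAlgebra K (FreeGroup ι)) := by
    have hre : ∀ i ∈ Finset.range d, ∑ w ∈ Sd, l w • Pel (K := K) (w.rotate i)
        = ∑ v ∈ Sd, l (v.rotate (d - i)) • Pel (K := K) v := by
      intro i hi
      have hi' : i < d := Finset.mem_range.1 hi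
      refine Finset.sum_nbij' (fun w => w.rotate i) (fun v => v.rotate (d - i))
        ?_ ?_ ?_ ?_ ?_
      · intro w hw
        exact (hmemSd _).2 (by rw [List.length_rotate]; exact (hmemSd w).1 hw)
      · intro v hv
        exact (hmemSd _).2 (by rw [List.length_rotate]; exact (hmemSd v).1 hv)
      · intro w hw
        rw [List.rotate_rotate]
        have : i + (d - i) = d := by omega
        rw [this, ← (hmemSd w).1 hw, List.rotate_length]
      · intro v hv
        rw [List.rotate_rotate]
        have : d - i + i = d := by omega
        rw [this, ← (hmemSd v).1 hv, List.rotate_length]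
      · intro w hw
        have : (w.rotate i).rotate (d - i) = w := by
          rw [List.rotate_rotate]
          have h : i + (d - i) = d := by omega
          rw [h, ← (hmemSd w).1 hw, List.rotate_length]
        rw [this]
    rw [Finset.sum_congr rfl hre, Finset.sum_comm]
    refine Finset.sum_eq_zero fun v hv => ?_
    rw [← Finset.sum_smul]
    have hv' := (hmemSd v).1 hv
    have hinner : ∑ i ∈ Finset.range d, l (v.rotate (d - i))
        = ∑ i ∈ Finset.range d, l (v.rotate i) := by
      refine Finset.sum_nbij' (fun i => (d - i) % d) (fun i => (d - i) % d)
        ?_ ?_ ?_ ?_ ?_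
      · intro i hi
        exact Finset.mem_range.2 (Nat.mod_lt _ (by omega))
      · intro i hi
        exact Finset.mem_range.2 (Nat.mod_lt _ (by omega))
      · intro i hi
        have hi' : i < d := Finset.mem_range.1 hi
        rcases Nat.eq_zero_or_pos i with rfl | hpos
        · simp [Nat.mod_self]
        · have h1 : d - i < d := by omega
          rw [Nat.mod_eq_of_lt h1]
          have h2 : d - (d - i) = i := by omega
          rw [h2, Nat.mod_eq_of_lt hi']
      · intro i hi
        have hi' : i < d := Finset.mem_range.1 hi
        rcases Nat.eq_zero_or_pos i with rfl | hpos
        · simp [Nat.mod_self]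
        · have h1 : d - i < d := by omega
          rw [Nat.mod_eq_of_lt h1]
          have h2 : d - (d - i) = i := by omega
          rw [h2, Nat.mod_eq_of_lt hi']
      · intro i hi
        have : v.rotate ((d - i) % d) = v.rotate (d - i) := by
          rw [← hv', List.rotate_mod]
        rw [this]
    rw [hinner, star v hv', zero_smul]
  have hdy : (d : ℕ) • (∑ w ∈ Sd, l w • Pel (K := K) w) ∈ conjugationSpan ι K := by
    have hsplit : (d : ℕ) • (∑ w ∈ Sd, l w • Pel (K := K) w)
        = (∑ i ∈ Finset.range d, ∑ w ∈ Sd, l w • ((Pel w : MonoidAlgebra K (FreeGroup ι))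
            - Pel (w.rotate i)))
          + ∑ i ∈ Finset.range d, ∑ w ∈ Sd, l w • Pel (K := K) (w.rotate i) := by
      rw [← Finset.sum_add_distrib]
      have : ∀ i ∈ Finset.range d,
          (∑ w ∈ Sd, l w • ((Pel w : MonoidAlgebra K (FreeGroup ι)) - Pel (w.rotate i)))
            + ∑ w ∈ Sd, l w • Pel (K := K) (w.rotate i) = ∑ w ∈ Sd, l w • Pel (K := K) w := by
        intro i _
        rw [← Finset.sum_add_distrib]
        refine Finset.sum_congr rfl fun w _ => ?_
        rw [smul_sub]
        abel
      rw [Finset.sum_congr rfl this, Finset.sum_const, Finset.card_range]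
    rw [hsplit, hz, add_zero]
    refine Submodule.sum_mem _ fun i hi => Submodule.sum_mem _ fun w hw => ?_
    refine Submodule.smul_mem _ _ (Pel_rotate_mem w i ?_)
    rw [(hmemSd w).1 hw]
    exact le_of_lt (Finset.mem_range.1 hi)
  have hd0 : ((d : ℚ)) ≠ 0 := by
    exact_mod_cast (by omega : d ≠ 0)
  have hscale : (∑ w ∈ Sd, l w • Pel (K := K) w)
      = (algebraMap ℚ K (d : ℚ)⁻¹) • ((d : ℕ) • (∑ w ∈ Sd, l w • Pel (K := K) w)) := by
    rw [← Nat.cast_smul_eq_nsmul K d, smul_smul]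
    have hcast : ((d : ℕ) : K) = algebraMap ℚ K ((d : ℕ) : ℚ) := by
      rw [map_natCast]
    rw [hcast, ← map_mul, inv_mul_cancel₀ hd0, map_one, one_smul]
  rw [hy', hscale]
  exact Submodule.smul_mem _ _ hdy

/-! #### The decomposition of the group ring -/

lemma top_decomp (n : ℕ) (hn : 1 ≤ n) (u : MonoidAlgebra K (FreeGroup ι)) :
    u ∈ Submodule.span K {(1 : MonoidAlgebra K (FreeGroup ι))}
      ⊔ Submodule.span K (Pel '' {w : List ι | 1 ≤ w.length ∧ w.length < n})
      ⊔ augIdealPow n := by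
  have hrep : u = Finsupp.sum u.coeff fun x c => c • MonoidAlgebra.of K (FreeGroup ι) x := by
    conv_lhs => rw [← MonoidAlgebra.sum_coeff_single u]
    refine Finset.sum_congr rfl fun x _ => ?_
    beta_reduce
    rw [MonoidAlgebra.of_apply, MonoidAlgebra.smul_single', mul_one]
  rw [hrep]
  apply Submodule.finsuppSum_mem
  intro x hx
  refine Submodule.smul_mem _ _ ?_
  have hsplit : MonoidAlgebra.of K (FreeGroup ι) x
      = 1 + (MonoidAlgebra.of K (FreeGroup ι) x - 1) := by abel
  rw [hsplit]
  refine add_mem (Submodule.mem_sup_left (Submodule.mem_sup_left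
    (Submodule.subset_span rfl))) ?_
  have h1 : (MonoidAlgebra.of K (FreeGroup ι) x - 1) ∈ augIdealPow (ι := ι) (K := K) 1 :=
    Submodule.subset_span ⟨[x], by simp, by simp⟩
  have h2 := aug_le_split (ι := ι) (K := K) n 1 le_rfl hn h1
  obtain ⟨p, hp, q, hq, hpq⟩ := Submodule.mem_sup.1 h2
  rw [← hpq]
  exact add_mem (Submodule.mem_sup_left (Submodule.mem_sup_right hp))
    (Submodule.mem_sup_right hq)

end AuxDev

/-- let `θ` be a group-like expansion of a finitely generated
free group `π` and `θ̄ : Kπ → T̂` its linear extension.  For every `n ≥ 1` and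
`u ∈ Kπ`, one has `N(θ̄(u)) ∈ N(T̂ₙ)` if and only if `|u| ∈ |K·1 + (Iπ)ⁿ|`,
i.e. iff `u` differs from an element of `K·1 + (Iπ)ⁿ` by an element of the span
of the `xy − yx`. -/
theorem cyclicN_linExt_mem_iff
    [Fintype ι] [DecidableEq ι] [Algebra ℚ K]
    (θ : FreeGroup ι → NCSeries ι K) (hθ : IsGroupLikeExpansion θ)
    (n : ℕ) (hn : 1 ≤ n) (u : MonoidAlgebra K (FreeGroup ι)) :
    (∃ g : NCSeries ι K, (∀ w : List ι, w.length < n → g w = 0) ∧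
        cyclicN (linExt θ u) = cyclicN g) ↔
      (∃ v ∈ Submodule.span K {(1 : MonoidAlgebra K (FreeGroup ι))} ⊔
          augIdealPow (ι := ι) (K := K) n,
        u - v ∈ conjugationSpan ι K) := by

  obtain ⟨hm, hgl, hcoef⟩ := hθ
  have heps : ∀ x : FreeGroup ι, θ x [] = 1 := fun x => (hgl x).1
  have h1 : θ 1 = oneNC := theta_one θ hm (heps 1)
  constructor
  · rintro ⟨g, hg, hNg⟩
    have hu : ∀ w : List ι, w ≠ [] → w.length < n → cyclicN (linExt θ u) w = 0 := by
      intro w hw hlen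
      rw [hNg, cyclicN_ne_nil _ hw]
      exact Finset.sum_eq_zero fun i _ => hg _ (by rw [List.length_rotate]; exact hlen)
    have main : ∀ d : ℕ, 1 ≤ d → d ≤ n →
        u ∈ Submodule.span K {(1 : MonoidAlgebra K (FreeGroup ι))}
          ⊔ Submodule.span K (Pel '' {w : List ι | d ≤ w.length ∧ w.length < n})
          ⊔ augIdealPow n ⊔ conjugationSpan ι K := by
      intro d
      induction d with
      | zero => intro h _; exact absurd h (by omega)
      | succ d ihd =>
        intro _ hdn
        rcases Nat.eq_zero_or_pos d with rfl | hdpos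
        · exact Submodule.mem_sup_left (top_decomp n hn u)
        · have ihm := ihd (by omega) (by omega)
          have hsetsplit : {w : List ι | d ≤ w.length ∧ w.length < n}
              = {w : List ι | w.length = d}
                ∪ {w : List ι | d + 1 ≤ w.length ∧ w.length < n} := by
            ext w
            simp only [Set.mem_setOf_eq, Set.mem_union]
            omega
          rw [hsetsplit, Set.image_union, Submodule.span_union] at ihm
          obtain ⟨t1, ht1, s, hsC, hu1⟩ := Submodule.mem_sup.1 ihm
          obtain ⟨t2, ht2, r, hr, hu2⟩ := Submodule.mem_sup.1 ht1
          obtain ⟨a, ha, t3, ht3, hu3⟩ := Submodule.mem_sup.1 ht2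
          obtain ⟨y, hy, y', hy', hu4⟩ := Submodule.mem_sup.1 ht3
          have hyc : y ∈ conjugationSpan ι K := by
            refine key_step θ hm h1 heps hcoef hdpos hy ?_
            intro w' hw'
            have hwne : w' ≠ [] := by
              intro h; rw [h] at hw'; simp at hw'; omega
            have hwlt : w'.length < n := by omega
            have e1 : cyclicN (linExt θ a) w' = 0 := by
              obtain ⟨c, hc1⟩ := Submodule.mem_span_singleton.1 ha
              rw [← hc1, linExt_smul, linExt_one θ h1, cyclicN_smul, cyclicN_oneNC]
              simp
            have e2 : cyclicN (linExt θ y') w' = 0 := by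
              have hle : Submodule.span K
                  (Pel '' {w : List ι | d + 1 ≤ w.length ∧ w.length < n})
                  ≤ augIdealPow (ι := ι) (K := K) (d + 1) := by
                refine Submodule.span_le.2 ?_
                rintro z ⟨w, hw, rfl⟩
                simp only [Set.mem_setOf_eq] at hw
                exact augPow_le_of_le (by omega) (by omega) (Pel_mem_aug w)
              exact cyclicN_VB (VB_linExt_aug θ hm h1 heps (hle hy')) (by omega)
            have e3 : cyclicN (linExt θ r) w' = 0 :=
              cyclicN_VB (VB_linExt_aug θ hm h1 heps hr) (by omega)
            have e4 : cyclicN (linExt θ s) w' = 0 :=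
              congrFun (cyclicN_linExt_conj θ hm hsC) w'
            have h0 := hu w' hwne hwlt
            rw [← hu1, ← hu2, ← hu3, ← hu4] at h0
            simp only [linExt_add, cyclicN_add, Pi.add_apply] at h0
            rw [e1, e2, e3, e4] at h0
            simpa using h0
          rw [← hu1, ← hu2, ← hu3, ← hu4]
          refine add_mem (add_mem (add_mem ?_ (add_mem ?_ ?_)) ?_) ?_
          · exact Submodule.mem_sup_left (Submodule.mem_sup_left (Submodule.mem_sup_left ha))
          · exact Submodule.mem_sup_right hyc
          · exact Submodule.mem_sup_left (Submodule.mem_sup_left (Submodule.mem_sup_right hy'))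
          · exact Submodule.mem_sup_left (Submodule.mem_sup_right hr)
          · exact Submodule.mem_sup_right hsC
    have hfin := main n hn le_rfl
    have hempty : {w : List ι | n ≤ w.length ∧ w.length < n} = (∅ : Set (List ι)) := by
      ext w
      simp only [Set.mem_setOf_eq, Set.mem_empty_iff_false, iff_false]
      omega
    rw [hempty] at hfin
    simp only [Set.image_empty, Submodule.span_empty, sup_bot_eq] at hfin
    obtain ⟨p, hp, q, hq, hpq⟩ := Submodule.mem_sup.1 hfin
    refine ⟨p, hp, ?_⟩
    rw [← hpq]
    simpa using hq
  · rintro ⟨v, hv, hc⟩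
    obtain ⟨a, ha, r, hr, hva⟩ := Submodule.mem_sup.1 hv
    refine ⟨linExt θ r, fun w hw => VB_linExt_aug θ hm h1 heps hr w hw, ?_⟩
    obtain ⟨c, hc1⟩ := Submodule.mem_span_singleton.1 ha
    have hurep : u = a + r + (u - v) := by rw [← hva]; abel
    rw [hurep, ← hc1]
    simp only [linExt_add, cyclicN_add, linExt_smul, cyclicN_smul]
    rw [linExt_one θ h1, cyclicN_oneNC, cyclicN_linExt_conj θ hm hc]
    simp
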